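/- If α ≥ 1.55 and p₂ > 2.24, then for all Q > 0, with γ² = α² + π² and R_r = (γ²/α²)(γ⁴ + Qπ²), one has b = 2π⁴Q(π² − α²) − p₂²α⁴R_r < 0. -/

import Mathlib

open Real

theorem stmt_9 (α p₂ Q : ℝ) (hα : α ≥ 1.55) (hp₂ : p₂ > 2.24) (hQ : 0 < Q)
    (γsq Rr : ℝ)
    (hγ : γsq = α^2 + π^2)
    (hR : Rr = (γsq/α^2) * (γsq^2 + Q*π^2)) :
    2*π^4*Q*(π^2 - α^2) - p₂^2*α^4*Rr < 0 := by
  have hπ : (3.141592:ℝ) < π := Real.pi_gt_d6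
  have hπ' : π < 3.141593 := Real.pi_lt_d6
  have hα0 : (0:ℝ) < α := by linarith
  have hα2 : (0:ℝ) < α^2 := by positivity
  have hterm : p₂^2*α^4*Rr = p₂^2*α^2*γsq*(γsq^2 + Q*π^2) := by
    rw [hR]; field_simp
  rw [hterm, hγ]
  have hp0 : (0:ℝ) < p₂ := by linarith
  have hs1 : (9.8696:ℝ) < π^2 := by nlinarith
  have hs2 : π^2 < 9.8697 := by nlinarith
  have ha : (2.4025:ℝ) ≤ α^2 := by nlinarith
  have hp2 : (5.0176:ℝ) < p₂^2 := by nlinarith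
  have key : 2*π^2*(π^2 - α^2) < p₂^2*α^2*(α^2+π^2) := by
    nlinarith [mul_nonneg (sub_nonneg.mpr ha) (sq_nonneg π),
      mul_nonneg (le_of_lt (sub_pos.mpr hp2)) (le_of_lt hα2),
      mul_nonneg (mul_nonneg (le_of_lt (sub_pos.mpr hp2)) (le_of_lt hα2)) (le_of_lt hα2),
      mul_nonneg (sub_nonneg.mpr ha) (sub_nonneg.mpr ha)]
  have h1 : 0 < Q * (π^2 * (p₂^2*α^2*(α^2+π^2) - 2*π^2*(π^2-α^2))) :=
    mul_pos hQ (mul_pos (by positivity) (sub_pos.mpr key))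
  have hpos : (0:ℝ) < p₂^2*α^2*(α^2+π^2)*(α^2+π^2)^2 := by positivity
  nlinarith [h1, hpos]
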